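/- Consider the two-state exponential zig-zag process (X_t, I_t) on [0,1]×{1,2} with generator L f(x,i) = (1_{i=1} − x) ∂_x f(x,i) + a θ_{3−i}[f(x,3−i) − f(x,i)], where a, θ_1, θ_2 > 0. The probability measure π = (θ_1/(θ_1+θ_2)) β(aθ_1+1, aθ_2) ⊗ δ_1 + (θ_2/(θ_1+θ_2)) β(aθ_1, aθ_2+1) ⊗ δ_2 is stationary for this process, i.e. ∫ L f dπ = 0 for all f that are C¹ in x. -/

import Mathlib

open MeasureTheory

/-- The Beta distribution `β(α,γ)` on `[0,1]`, with density
`x^{α-1} (1-x)^{γ-1} Γ(α+γ)/(Γ(α)Γ(γ))` with respect to Lebesgue measure. -/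
noncomputable def betaMeas (α γ : ℝ) : Measure ℝ :=
  (volume.restrict (Set.Ioo (0:ℝ) 1)).withDensity
    (fun x => ENNReal.ofReal
      (x ^ (α - 1) * (1 - x) ^ (γ - 1) * Real.Gamma (α + γ) / (Real.Gamma α * Real.Gamma γ)))

section ZigZagAux

open Set
open scoped ENNReal NNReal

lemma zz_integrableOn_weight {p q : ℝ} (hp : 0 < p) (hq : 0 < q) :
    IntegrableOn (fun x : ℝ => x ^ (p-1) * (1-x) ^ (q-1)) (Ioo (0:ℝ) 1) := by
  have h := Complex.betaIntegral_convergent (u := (p:ℂ)) (v := (q:ℂ)) (by simpa) (by simpa)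
  have h2 : IntegrableOn (fun x : ℝ => ((x:ℂ) ^ ((p:ℂ) - 1) * (1 - (x:ℂ)) ^ ((q:ℂ) - 1)))
      (Ioo (0:ℝ) 1) := by
    have := (intervalIntegrable_iff_integrableOn_Ioo_of_le (by norm_num : (0:ℝ) ≤ 1)).1 h
    exact this
  have h3 := h2.re
  refine (integrableOn_congr_fun ?_ measurableSet_Ioo).2 h3
  intro x hx
  have hx0 : (0:ℝ) ≤ x := hx.1.le
  have hx1 : (0:ℝ) ≤ 1 - x := by linarith [hx.2]
  have e1 : (x:ℂ) ^ ((p:ℂ) - 1) = ((x ^ (p-1) : ℝ) : ℂ) := by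
    rw [Complex.ofReal_cpow hx0]; norm_cast
  have e2 : (1 - (x:ℂ)) ^ ((q:ℂ) - 1) = (((1 - x) ^ (q-1) : ℝ) : ℂ) := by
    rw [Complex.ofReal_cpow hx1]; push_cast; ring_nf
  simp [e1, e2, ← Complex.ofReal_mul]

lemma zz_bddmul {w g : ℝ → ℝ} (hw : IntegrableOn w (Ioo (0:ℝ) 1)) (hg : Continuous g) :
    IntegrableOn (fun x => g x * w x) (Ioo (0:ℝ) 1) := by
  obtain ⟨C, hC⟩ := isCompact_Icc.exists_bound_of_continuousOn (f := g) hg.continuousOn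
    (s := Icc (0:ℝ) 1)
  refine Integrable.bdd_mul (c := C) hw (hg.aestronglyMeasurable.restrict) ?_
  refine (ae_restrict_iff' measurableSet_Ioo).2 (Filter.Eventually.of_forall fun x hx => ?_)
  exact hC x (Ioo_subset_Icc_self hx)

lemma zz_intdens {α γ : ℝ} (hα : 0 < α) (hγ : 0 < γ) {G : ℝ → ℝ} (hc : Continuous G) (c : ℝ) :
    IntegrableOn (fun x => c * ((x ^ (α-1) * (1-x) ^ (γ-1) * Real.Gamma (α+γ)
      / (Real.Gamma α * Real.Gamma γ)) * G x)) (Ioo (0:ℝ) 1) := by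
  have heq : (fun x => c * ((x ^ (α-1) * (1-x) ^ (γ-1) * Real.Gamma (α+γ)
        / (Real.Gamma α * Real.Gamma γ)) * G x))
      = fun x => (G x * (x ^ (α-1) * (1-x) ^ (γ-1)))
        * (c * Real.Gamma (α+γ) / (Real.Gamma α * Real.Gamma γ)) := by
    funext x; ring
  rw [heq]
  exact (zz_bddmul (zz_integrableOn_weight hα hγ) hc).mul_const _

lemma zz_ibp {p q : ℝ} (hp : 0 < p) (hq : 0 < q) {g g' : ℝ → ℝ}
    (hg : ∀ x, HasDerivAt g (g' x) x) (hg'c : Continuous g') :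
    ∫ x in Ioo (0:ℝ) 1, (x ^ p * (1-x) ^ q * g' x
      + g x * (p * (x ^ (p-1) * (1-x) ^ q) - q * (x ^ p * (1-x) ^ (q-1)))) = 0 := by
  have hgc : Continuous g := continuous_iff_continuousAt.2 fun x => (hg x).continuousAt
  set F : ℝ → ℝ := fun x => x ^ p * (1-x) ^ q * g x with hFdef
  set h : ℝ → ℝ := fun x => x ^ p * (1-x) ^ q * g' x
      + g x * (p * (x ^ (p-1) * (1-x) ^ q) - q * (x ^ p * (1-x) ^ (q-1))) with hhdef
  have hrho : Continuous (fun x : ℝ => x ^ p * (1-x) ^ q) :=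
    (Real.continuous_rpow_const hp.le).mul
      ((Real.continuous_rpow_const hq.le).comp (continuous_const.sub continuous_id))
  have hw1 : IntegrableOn (fun x : ℝ => x ^ (p-1) * (1-x) ^ q) (Ioo (0:ℝ) 1) := by
    have := zz_integrableOn_weight hp (show (0:ℝ) < q + 1 by linarith)
    simpa only [add_sub_cancel_right] using this
  have hw2 : IntegrableOn (fun x : ℝ => x ^ p * (1-x) ^ (q-1)) (Ioo (0:ℝ) 1) := by
    have := zz_integrableOn_weight (show (0:ℝ) < p + 1 by linarith) hq
    simpa only [add_sub_cancel_right] using this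
  have hInt : IntegrableOn h (Ioo (0:ℝ) 1) := by
    refine Integrable.add ?_ (zz_bddmul ((hw1.const_mul p).sub (hw2.const_mul q)) hgc)
    exact (integrableOn_Ioc_iff_integrableOn_Ioo enorm_ne_top).1 (hrho.mul hg'c).integrableOn_Ioc
  have hderiv : ∀ x ∈ Ioo (0:ℝ) 1, HasDerivAt F (h x) x := by
    intro x hx
    have h1 : HasDerivAt (fun x : ℝ => x ^ p) (p * x ^ (p-1)) x :=
      Real.hasDerivAt_rpow_const (Or.inl hx.1.ne')
    have h2 : HasDerivAt (fun x : ℝ => (1-x) ^ q) (q * (1-x) ^ (q-1) * (-1)) x := by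
      have hbase : HasDerivAt (fun x : ℝ => 1 - x) (-1) x := (hasDerivAt_id x).const_sub 1
      exact (Real.hasDerivAt_rpow_const
        (Or.inl (sub_ne_zero.2 (ne_of_lt hx.2).symm))).comp x hbase
    have := (h1.mul h2).mul (hg x)
    refine this.congr_deriv ?_
    simp only [hhdef, Pi.mul_apply]
    ring
  have hFIoo : IntervalIntegrable h volume 0 1 :=
    (intervalIntegrable_iff_integrableOn_Ioo_of_le (by norm_num)).2 hInt
  have key : ∫ x in (0:ℝ)..1, h x = F 1 - F 0 :=
    intervalIntegral.integral_eq_sub_of_hasDerivAt_of_le (by norm_num)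
      (hrho.mul hgc).continuousOn hderiv hFIoo
  have e0 : F 0 = 0 := by simp [hFdef, Real.zero_rpow hp.ne']
  have e1 : F 1 = 0 := by simp [hFdef, Real.zero_rpow hq.ne']
  rw [intervalIntegral.integral_of_le (by norm_num), integral_Ioc_eq_integral_Ioo] at key
  rw [key, e0, e1, sub_zero]

lemma zz_helper (α γ : ℝ) (hα : 0 < α) (hγ : 0 < γ) (i : Fin 2) (h : ℝ × Fin 2 → ℝ)
    (hc : Continuous fun x => h (x, i)) :
    Integrable h ((betaMeas α γ).prod (Measure.dirac i)) ∧
    ∫ z, h z ∂((betaMeas α γ).prod (Measure.dirac i))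
      = ∫ x in Ioo (0:ℝ) 1,
          (x ^ (α-1) * (1-x) ^ (γ-1) * Real.Gamma (α+γ) / (Real.Gamma α * Real.Gamma γ))
            * h (x, i) := by
  set d : ℝ → ℝ := fun x =>
    x ^ (α-1) * (1-x) ^ (γ-1) * Real.Gamma (α+γ) / (Real.Gamma α * Real.Gamma γ) with hd
  have md : Measurable d := by
    simp only [hd]; fun_prop
  have he : MeasurableEmbedding (fun x : ℝ => (x, i)) :=
    MeasurableEmbedding.id.prodMk_right i
  have hIoo : IntegrableOn (fun x => d x * h (x, i)) (Ioo (0:ℝ) 1) := by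
    have heq : (fun x => d x * h (x, i)) = fun x =>
        (h (x, i) * (x ^ (α-1) * (1-x) ^ (γ-1)))
          * (Real.Gamma (α+γ) / (Real.Gamma α * Real.Gamma γ)) := by
      funext x; simp only [hd]; ring
    rw [heq]
    exact (zz_bddmul (zz_integrableOn_weight hα hγ) hc).mul_const _
  have hsf : SFinite (betaMeas α γ) := by unfold betaMeas; infer_instance
  have hprod : (betaMeas α γ).prod (Measure.dirac i)
      = (betaMeas α γ).map (fun x => (x, i)) := Measure.prod_dirac i
  have hdnn : ∀ x ∈ Ioo (0:ℝ) 1, 0 ≤ d x := by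
    intro x hx
    have h1 : (0:ℝ) < x := hx.1
    have h2 : (0:ℝ) < 1 - x := by linarith [hx.2]
    have := Real.Gamma_pos_of_pos hα
    have := Real.Gamma_pos_of_pos hγ
    have := Real.Gamma_pos_of_pos (by linarith : 0 < α + γ)
    simp only [hd]
    positivity
  constructor
  · rw [hprod, he.integrable_map_iff]
    unfold betaMeas
    rw [integrable_withDensity_iff (md.ennreal_ofReal)
      (Filter.Eventually.of_forall fun x => ENNReal.ofReal_lt_top)]
    refine hIoo.congr ?_
    refine (ae_restrict_iff' measurableSet_Ioo).2 (Filter.Eventually.of_forall fun x hx => ?_)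
    dsimp only [Function.comp]
    rw [ENNReal.toReal_ofReal (hdnn x hx), mul_comm]
  · rw [hprod, he.integral_map]
    unfold betaMeas
    have hf : Measurable fun x => (d x).toNNReal := md.real_toNNReal
    have hcoe : (fun x => ENNReal.ofReal (d x)) = fun x => ((d x).toNNReal : ℝ≥0∞) := rfl
    rw [hcoe, integral_withDensity_eq_integral_smul hf]
    refine setIntegral_congr_fun measurableSet_Ioo fun x hx => ?_
    have hco : ((d x).toNNReal : ℝ) = d x := Real.coe_toNNReal _ (hdnn x hx)
    rw [NNReal.smul_def, smul_eq_mul, hco]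

end ZigZagAux

theorem beta_mixture_stationary_zigzag
    (a : ℝ) (ha : 0 < a) (θ : Fin 2 → ℝ) (hθ : ∀ i, 0 < θ i)
    (π : Measure (ℝ × Fin 2))
    (hπ : π = (ENNReal.ofReal (θ 0 / (θ 0 + θ 1))) •
            ((betaMeas (a * θ 0 + 1) (a * θ 1)).prod (Measure.dirac (0 : Fin 2)))
        + (ENNReal.ofReal (θ 1 / (θ 0 + θ 1))) •
            ((betaMeas (a * θ 0) (a * θ 1 + 1)).prod (Measure.dirac (1 : Fin 2))))
    (L : (ℝ → Fin 2 → ℝ) → ℝ × Fin 2 → ℝ)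
    (hL : ∀ f z, L f z = ((if z.2 = 0 then (1:ℝ) else 0) - z.1)
            * deriv (fun x => f x z.2) z.1
        + a * θ (1 - z.2) * (f z.1 (1 - z.2) - f z.1 z.2)) :
    ∀ f : ℝ → Fin 2 → ℝ, (∀ i, ContDiff ℝ 1 (fun x => f x i)) →
      ∫ z, L f z ∂π = 0 := by
  intro f hf
  have hθ0 := hθ 0
  have hθ1 := hθ 1
  have hp : 0 < a * θ 0 := mul_pos ha hθ0
  have hq : 0 < a * θ 1 := mul_pos ha hθ1
  have hD0c : Continuous (deriv fun x => f x 0) := (hf 0).continuous_deriv le_rfl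
  have hD1c : Continuous (deriv fun x => f x 1) := (hf 1).continuous_deriv le_rfl
  have l0 : ∀ x : ℝ, L f (x, 0) = (1 - x) * deriv (fun y => f y 0) x
      + a * θ 1 * (f x 1 - f x 0) := by
    intro x
    rw [hL]
    norm_num
  have l1 : ∀ x : ℝ, L f (x, 1) = (0 - x) * deriv (fun y => f y 1) x
      + a * θ 0 * (f x 0 - f x 1) := by
    intro x
    rw [hL]
    norm_num
  have hc0 : Continuous fun x => L f (x, (0 : Fin 2)) := by
    have : (fun x => L f (x, (0 : Fin 2))) = fun x => (1 - x) * deriv (fun y => f y 0) x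
        + a * θ 1 * (f x 1 - f x 0) := funext l0
    rw [this]
    exact ((continuous_const.sub continuous_id).mul hD0c).add
      (continuous_const.mul (((hf 1).continuous).sub ((hf 0).continuous)))
  have hc1 : Continuous fun x => L f (x, (1 : Fin 2)) := by
    have : (fun x => L f (x, (1 : Fin 2))) = fun x => (0 - x) * deriv (fun y => f y 1) x
        + a * θ 0 * (f x 0 - f x 1) := funext l1
    rw [this]
    exact ((continuous_const.sub continuous_id).mul hD1c).add
      (continuous_const.mul (((hf 0).continuous).sub ((hf 1).continuous)))
  obtain ⟨int0, eq0⟩ := zz_helper (a * θ 0 + 1) (a * θ 1) (by linarith) hq 0 (L f) hc0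
  obtain ⟨int1, eq1⟩ := zz_helper (a * θ 0) (a * θ 1 + 1) hp (by linarith) 1 (L f) hc1
  have hw0 : (0:ℝ) ≤ θ 0 / (θ 0 + θ 1) := by positivity
  have hw1 : (0:ℝ) ≤ θ 1 / (θ 0 + θ 1) := by positivity
  rw [hπ, integral_add_measure (int0.smul_measure ENNReal.ofReal_ne_top)
      (int1.smul_measure ENNReal.ofReal_ne_top),
    integral_smul_measure, integral_smul_measure, eq0, eq1,
    ENNReal.toReal_ofReal hw0, ENNReal.toReal_ofReal hw1, smul_eq_mul, smul_eq_mul,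
    ← integral_const_mul, ← integral_const_mul,
    ← integral_add (zz_intdens (by linarith) hq hc0 _) (zz_intdens hp (by linarith) hc1 _)]
  -- now a single integral over Ioo 0 1
  have hder : ∀ x : ℝ, HasDerivAt (fun y => f y 0 - f y 1)
      ((deriv fun y => f y 0) x - (deriv fun y => f y 1) x) x := fun x =>
    ((((hf 0).differentiable one_ne_zero) x).hasDerivAt).sub
      ((((hf 1).differentiable one_ne_zero) x).hasDerivAt)
  have key := zz_ibp hp hq (g := fun y => f y 0 - f y 1)
    (g' := fun x => (deriv fun y => f y 0) x - (deriv fun y => f y 1) x)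
    hder (hD0c.sub hD1c)
  set K : ℝ := Real.Gamma (a * θ 0 + a * θ 1)
    / (Real.Gamma (a * θ 0) * Real.Gamma (a * θ 1)) with hK
  have step : ∫ x in Set.Ioo (0:ℝ) 1,
      (θ 0 / (θ 0 + θ 1) * ((x ^ (a * θ 0 + 1 - 1) * (1-x) ^ (a * θ 1 - 1)
          * Real.Gamma (a * θ 0 + 1 + a * θ 1)
          / (Real.Gamma (a * θ 0 + 1) * Real.Gamma (a * θ 1))) * L f (x, 0))
        + θ 1 / (θ 0 + θ 1) * ((x ^ (a * θ 0 - 1) * (1-x) ^ (a * θ 1 + 1 - 1)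
          * Real.Gamma (a * θ 0 + (a * θ 1 + 1))
          / (Real.Gamma (a * θ 0) * Real.Gamma (a * θ 1 + 1))) * L f (x, 1)))
      = ∫ x in Set.Ioo (0:ℝ) 1,
        K * (x ^ (a * θ 0) * (1-x) ^ (a * θ 1)
            * ((deriv fun y => f y 0) x - (deriv fun y => f y 1) x)
          + (f x 0 - f x 1) * (a * θ 0 * (x ^ (a * θ 0 - 1) * (1-x) ^ (a * θ 1))
            - a * θ 1 * (x ^ (a * θ 0) * (1-x) ^ (a * θ 1 - 1)))) := by
    refine setIntegral_congr_fun measurableSet_Ioo fun x hx => ?_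
    have hx0 : (0:ℝ) < x := hx.1
    have hx1 : (0:ℝ) < 1 - x := by linarith [hx.2]
    have A : x ^ (a * θ 0 - 1) * x = x ^ (a * θ 0) := by
      have h := Real.rpow_add_one (ne_of_gt hx0) (a * θ 0 - 1)
      rw [← h]
      congr 1
      ring
    have B : (1-x) ^ (a * θ 1 - 1) * (1-x) = (1-x) ^ (a * θ 1) := by
      have h := Real.rpow_add_one (ne_of_gt hx1) (a * θ 1 - 1)
      rw [← h]
      congr 1
      ring
    have eΓ1 : a * θ 0 + 1 + a * θ 1 = (a * θ 0 + a * θ 1) + 1 := by ring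
    have eΓ2 : a * θ 0 + (a * θ 1 + 1) = (a * θ 0 + a * θ 1) + 1 := by ring
    have hS : (0:ℝ) < a * θ 0 + a * θ 1 := by linarith
    have hΓp := Real.Gamma_pos_of_pos hp
    have hΓq := Real.Gamma_pos_of_pos hq
    have hΓS := Real.Gamma_pos_of_pos hS
    rw [l0, l1, eΓ1, eΓ2, Real.Gamma_add_one hS.ne', Real.Gamma_add_one hp.ne',
      Real.Gamma_add_one hq.ne']
    simp only [add_sub_cancel_right, hK]
    rw [← A, ← B]
    have hsum : θ 0 + θ 1 ≠ 0 := by positivity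
    field_simp
    ring
  rw [step, integral_const_mul, key, mul_zero]
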